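/- Let w ∈ αΣ* ∩ Σ*‾α be non-α-crossing, and suppose u ∈ P_α(w), ‾v ∈ S_‾α(w) satisfy v ∈ (P_α(uα))* and u ∈ (‾(S_‾α(‾α‾v)))*. Then (P_α(uα))* · w · (‾(P_α(uα)))* ⊆ H*_α(w). -/

import Mathlib

open List

namespace Hairpin

variable {S : Type} [DecidableEq S]

/-- Antimorphic extension of an involution to words. -/
def comp (bar : S → S) (w : List S) : List S := (w.map bar).reverse

/-- Right hairpin completion w.r.t. primer `a`. -/
def RH (bar : S → S) (a w z : List S) : Prop :=
  ∃ γ β : List S, w = γ ++ a ++ β ++ comp bar a ∧ z = w ++ comp bar γ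

/-- Left hairpin completion w.r.t. primer `a`. -/
def LH (bar : S → S) (a w z : List S) : Prop :=
  ∃ γ β : List S, w = a ++ β ++ comp bar a ++ comp bar γ ∧ z = γ ++ w

/-- One hairpin completion step. -/
def HC (bar : S → S) (a w z : List S) : Prop := RH bar a w z ∨ LH bar a w z

/-- Iterated hairpin completion `H*_α(w)`. -/
def HCstar (bar : S → S) (a w : List S) : Set (List S) :=
  { z | Relation.ReflTransGen (HC bar a) w z }

/-- `w` is non-`a`-crossing: every occurrence of `a` starts no later than
every occurrence of `comp bar a`. -/
def NonCrossing (bar : S → S) (a w : List S) : Prop :=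
  ∀ i j : ℕ, a <+: w.drop i → comp bar a <+: w.drop j → i ≤ j

/-- The set of `a`-prefixes of `w`. -/
def Pa (a w : List S) : Set (List S) := { u | u ++ a <+: w }

/-- The set of `‾a`-suffixes of `w` (the elements are the words `‾v`). -/
def Sa (bar : S → S) (a w : List S) : Set (List S) :=
  { x | comp bar a ++ x <:+ w }

/-- The set of complements of `‾a`-suffixes of `w`, i.e. `‾(S_‾α(w))`. -/
def barSa (bar : S → S) (a w : List S) : Set (List S) :=
  { v | comp bar a ++ comp bar v <:+ w }

/-- Kleene star of a set of words: all finite concatenations. -/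
def star (X : Set (List S)) : Set (List S) :=
  { x | ∃ l : List (List S), (∀ y ∈ l, y ∈ X) ∧ x = l.flatten }

/-- `ind_α(x)`: the number of occurrences of `a` in `x ++ a` other than the
suffix occurrence, i.e. the number of positions `i < |x|` where `a` occurs. -/
def inda (a x : List S) : ℕ :=
  ((Finset.range x.length).filter (fun i => a <+: (x ++ a).drop i)).card

/-! ### Auxiliary lemmas -/

section Aux

variable (bar : S → S)

lemma comp_append (s t : List S) : comp bar (s ++ t) = comp bar t ++ comp bar s := by
  simp [comp]

lemma comp_nil : comp bar ([] : List S) = [] := rfl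

lemma comp_length (s : List S) : (comp bar s).length = s.length := by simp [comp]

lemma comp_comp (hbar : Function.Involutive bar) (s : List S) :
    comp bar (comp bar s) = s := by
  simp [comp, List.map_reverse, List.map_map, hbar.comp_self]

lemma comp_prefix {s t : List S} (h : s <+: t) : comp bar s <:+ comp bar t := by
  obtain ⟨r, rfl⟩ := h
  exact ⟨comp bar r, (comp_append bar s r).symm⟩

lemma comp_suffix {s t : List S} (h : s <:+ t) : comp bar s <+: comp bar t := by
  obtain ⟨r, rfl⟩ := h
  exact ⟨comp bar r, (comp_append bar r s).symm⟩

lemma prefix_total {s s' t : List S} (h1 : s <+: t) (h2 : s' <+: t)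
    (hl : s.length ≤ s'.length) : s <+: s' := by
  rcases List.prefix_or_prefix_of_prefix h1 h2 with h | h
  · exact h
  · have := List.IsPrefix.eq_of_length_le h (by omega)
    exact this ▸ List.prefix_rfl

lemma suffix_total {s s' t : List S} (h1 : s <:+ t) (h2 : s' <:+ t)
    (hl : s.length ≤ s'.length) : s <:+ s' := by
  rcases List.suffix_or_suffix_of_suffix h1 h2 with h | h
  · exact h
  · have := List.IsSuffix.eq_of_length_le h (by omega)
    exact this ▸ List.suffix_rfl

lemma prefix_head {s t r : List S} (h : s <+: t ++ r) (hl : s.length ≤ t.length) :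
    s <+: t :=
  prefix_total h (t.prefix_append r) hl

lemma suffix_append_left {s t : List S} (r : List S) (h : s <:+ t) : s <:+ r ++ t := by
  obtain ⟨pre, rfl⟩ := h
  exact ⟨r ++ pre, by simp [List.append_assoc]⟩

/-- If `a ≤ g ++ a` for each piece and `a ≤ t`, then `a ≤ flatten ++ t`. -/
lemma startA {a : List S} (l : List (List S)) (hl : ∀ g ∈ l, a <+: g ++ a)
    {t : List S} (ht : a <+: t) : a <+: l.flatten ++ t := by
  induction l with
  | nil => simpa using ht
  | cons g l' ih =>
    have hg : a <+: g ++ a := hl g List.mem_cons_self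
    have h2 : a <+: l'.flatten ++ t := ih (fun g hg => hl g (List.mem_cons_of_mem _ hg))
    have h3 : g ++ a <+: g ++ (l'.flatten ++ t) :=
      (List.prefix_append_right_inj g).mpr h2
    have := hg.trans h3
    simpa [List.append_assoc] using this

/-! ### star lemmas -/

lemma star_nil (X : Set (List S)) : ([] : List S) ∈ star X :=
  ⟨[], by simp, rfl⟩

lemma mem_star_of_mem {X : Set (List S)} {g : List S} (h : g ∈ X) : g ∈ star X :=
  ⟨[g], by simpa using h, by simp⟩

lemma star_append {X : Set (List S)} {x y : List S} (hx : x ∈ star X) (hy : y ∈ star X) :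
    x ++ y ∈ star X := by
  obtain ⟨lx, hlx, rfl⟩ := hx
  obtain ⟨ly, hly, rfl⟩ := hy
  exact ⟨lx ++ ly, by
    intro g hg; rcases List.mem_append.mp hg with h | h
    exacts [hlx g h, hly g h], by simp⟩

lemma star_mono {X Y : Set (List S)} (h : X ⊆ Y) : star X ⊆ star Y := by
  rintro x ⟨l, hl, rfl⟩
  exact ⟨l, fun g hg => h (hl g hg), rfl⟩

lemma star_bind {X G : Set (List S)} (h : ∀ g ∈ X, g ∈ star G) {x : List S}
    (hx : x ∈ star X) : x ∈ star G := by
  obtain ⟨l, hl, rfl⟩ := hx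
  induction l with
  | nil => exact star_nil G
  | cons g l' ih =>
    have h1 : g ∈ star G := h g (hl g List.mem_cons_self)
    have h2 : l'.flatten ∈ star G := ih (fun g hg => hl g (List.mem_cons_of_mem _ hg))
    simpa using star_append h1 h2

lemma flatten_filter_ne_nil (l : List (List S)) :
    (l.filter (fun g => !g.isEmpty)).flatten = l.flatten := by
  induction l with
  | nil => rfl
  | cons g l' ih =>
    by_cases hg : g = []
    · subst hg; simpa using ih
    · have : (g.isEmpty : Bool) = false := by
        cases g with
        | nil => simp at hg
        | cons _ _ => rfl
      simp [List.filter_cons, this, ih]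

end Aux

/-! ### The GG factorization lemma -/

section GG

variable {bar : S → S} {a : List S}

/-- Common pieces w.r.t. both masters. -/
def GAB (a A B : List S) : Set (List S) :=
  {g | g ++ a <+: A ++ a ∧ g ++ a <+: B ++ a}

lemma GAB_comm (a A B : List S) : GAB a A B = GAB a B A := by
  ext g; exact and_comm

lemma gg_inner (a A B : List S) (haB : a <+: B ++ a) (k : ℕ)
    (IH : ∀ r : List S, r.length < k → r ++ a <+: B ++ a → r ∈ star (GAB a A B)) :
    ∀ Lst : List (List S), (∀ g ∈ Lst, g ++ a <+: B ++ a) →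
      ∀ r : List S, r ++ a <+: Lst.flatten ++ a → r.length ≤ k →
      (r ++ a <+: A ++ a ∨ r.length < k) → r ∈ star (GAB a A B) := by
  intro Lst
  induction Lst with
  | nil =>
    intro _ r hr _ _
    have h1 : r.length + a.length ≤ a.length := by simpa using hr.length_le
    have : r = [] := List.length_eq_zero_iff.mp (by omega)
    exact this ▸ star_nil _
  | cons q Lst' ih =>
    intro hLst r hr hrk halt
    have hLst' : ∀ g ∈ Lst', g ++ a <+: B ++ a :=
      fun g hg => hLst g (List.mem_cons_of_mem _ hg)
    by_cases hq0 : q = []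
    · subst hq0
      exact ih hLst' r (by simpa using hr) hrk halt
    · have hq : q ++ a <+: B ++ a := hLst q List.mem_cons_self
      have haf : a <+: Lst'.flatten ++ a :=
        startA Lst' (fun g hg => prefix_total haB (hLst' g hg) (by simp)) List.prefix_rfl
      have hqf : q ++ a <+: (q :: Lst').flatten ++ a := by
        have := (List.prefix_append_right_inj q).mpr haf
        simpa [List.append_assoc] using this
      by_cases hle : r.length ≤ q.length
      · have hrq : r ++ a <+: q ++ a := prefix_total hr hqf (by simpa using by omega)
        have hrB : r ++ a <+: B ++ a := hrq.trans hq
        rcases halt with hA | hk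
        · exact mem_star_of_mem ⟨hA, hrB⟩
        · exact IH r hk hrB
      · push_neg at hle
        have hqr : q ++ a <+: r ++ a := prefix_total hqf hr (by simpa using by omega)
        have hqpre : q <+: r :=
          prefix_head ((q.prefix_append a).trans hqr) (le_of_lt hle)
        have hqG : q ∈ star (GAB a A B) := IH q (by omega) hq
        obtain ⟨r', hr'⟩ := hqpre
        have hq1 : 1 ≤ q.length := by
          cases q with
          | nil => exact absurd rfl hq0
          | cons _ _ => simp
        have hr'len : r'.length < k := by
          have : q.length + r'.length = r.length := by
            have := congrArg List.length hr'; simpa using this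
          omega
        have hr'pre : r' ++ a <+: Lst'.flatten ++ a := by
          rw [← hr'] at hr
          have h2 : q ++ (r' ++ a) <+: q ++ (Lst'.flatten ++ a) := by
            simpa [List.append_assoc] using hr
          exact (List.prefix_append_right_inj q).mp h2
        have hr'G : r' ∈ star (GAB a A B) :=
          ih hLst' r' hr'pre (by omega) (Or.inr hr'len)
        exact hr' ▸ star_append hqG hr'G

lemma gg (u v : List S) (hau : a <+: u ++ a) (hav : a <+: v ++ a)
    (hvstar : ∃ l : List (List S), (∀ g ∈ l, g ++ a <+: u ++ a) ∧ v = l.flatten)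
    (hustar : ∃ l : List (List S), (∀ g ∈ l, g ++ a <+: v ++ a) ∧ u = l.flatten) :
    ∀ k (p : List S), p.length ≤ k → (p ++ a <+: u ++ a ∨ p ++ a <+: v ++ a) →
      p ∈ star (GAB a u v) := by
  intro k
  induction k using Nat.strong_induction_on with
  | _ k IHk =>
    intro p hpk hp
    rcases hp with hp | hp
    · obtain ⟨lu, hlu, hflu⟩ := hustar
      refine gg_inner a u v hav k ?_ lu hlu p (by rw [← hflu]; exact hp) hpk (Or.inl hp)
      intro r hrk hrB
      exact IHk r.length hrk r le_rfl (Or.inr hrB)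
    · obtain ⟨lv, hlv, hflv⟩ := hvstar
      have : p ∈ star (GAB a v u) := by
        refine gg_inner a v u hau k ?_ lv hlv p (by rw [← hflv]; exact hp) hpk (Or.inl hp)
        intro r hrk hrB
        have : r ∈ star (GAB a u v) := IHk r.length hrk r le_rfl (Or.inl hrB)
        exact star_mono (by rw [GAB_comm]) this
      exact star_mono (by rw [GAB_comm a v u]) this

end GG


/-! ### pointwise index lemmas and the core length lemma -/

section Core

lemma occ_getElem? {s t : List S} {i : ℕ} (h : s <+: t.drop i) {j : ℕ} (hj : j < s.length) :
    t[i + j]? = s[j]? := by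
  obtain ⟨r, hr⟩ := h
  have h2 : (t.drop i)[j]? = t[i + j]? := List.getElem?_drop
  rw [← hr] at h2
  rw [← h2, List.getElem?_append]
  simp [hj]

lemma suffix_getElem? {s t : List S} (h : s <:+ t) {j : ℕ} :
    t[t.length - s.length + j]? = s[j]? := by
  obtain ⟨r, rfl⟩ := h
  rw [List.getElem?_append_right (by simp)]
  congr 1
  simp

lemma prefix_of_pointwise {s t : List S} {k : ℕ} (h : ∀ j < s.length, t[k + j]? = s[j]?)
    (hk : k + s.length ≤ t.length) : s <+: t.drop k := by
  have htake : (t.drop k).take s.length = s := by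
    apply List.ext_getElem?
    intro i
    rw [List.getElem?_take]
    by_cases hi : i < s.length
    · simp only [hi, if_true]
      rw [List.getElem?_drop, h i hi]
    · simp [hi, List.getElem?_eq_none (by omega : s.length ≤ i)]
  exact htake ▸ List.take_prefix _ _

lemma comp_getElem? (bar : S → S) (t : List S) {j : ℕ} (hj : j < t.length) :
    (comp bar t)[j]? = (t[t.length - 1 - j]?).map bar := by
  unfold comp
  rw [List.getElem?_reverse (by simpa using hj)]
  simp [List.getElem?_map]

lemma modeq_sub_left {d s x y : ℕ} (hx : x ≤ s) (hy : y ≤ s) (h : x % d = y % d) :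
    (s - x) % d = (s - y) % d := by
  have h2 : (s - x) + x ≡ (s - y) + y [MOD d] := by
    rw [Nat.sub_add_cancel hx, Nat.sub_add_cancel hy]
  exact Nat.ModEq.add_right_cancel h h2

lemma modeq_sub_right {d p x r : ℕ} (hp : p ≤ x) (h : x % d = (p + r) % d) :
    (x - p) % d = r % d := by
  have h2 : (x - p) + p ≡ r + p [MOD d] := by
    rw [Nat.sub_add_cancel hp]
    calc x ≡ p + r [MOD d] := h
    _ = r + p := by omega
  exact Nat.ModEq.add_right_cancel rfl h2

lemma core_gen (bar : S → S) (a v z p : List S)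
    (ha : a ≠ comp bar a) (hv0 : v ≠ [])
    (hav : a <+: v ++ a)
    (hsuf : comp bar (v ++ a) <:+ z)
    (hpre : p ++ a <+: z)
    (hnc : NonCrossing bar a z) :
    p.length + 2 * a.length ≤ z.length := by
  have hd : 0 < v.length := List.length_pos_iff.mpr hv0
  have hn : 0 < a.length := by
    rcases Nat.eq_zero_or_pos a.length with h0 | h
    · exact absurd (by simp [List.length_eq_zero_iff.mp h0, comp]) ha
    · exact h
  have hoccp : a <+: z.drop p.length := by
    obtain ⟨r, hr⟩ := hpre
    refine ⟨r, ?_⟩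
    have h3 : z.drop p.length = (p ++ (a ++ r)).drop p.length := by
      rw [← List.append_assoc, hr]
    rw [h3, List.drop_append_of_le_length (le_refl _), List.drop_length]
    simp
  have hslen : a.length + v.length ≤ z.length := by
    have := hsuf.length_le
    simp only [comp_length, List.length_append] at this
    omega
  have hoccs : comp bar a <+: z.drop (z.length - (a.length + v.length)) := by
    obtain ⟨z₀, hz₀⟩ := hsuf
    rw [comp_append] at hz₀
    have hz₀l : z₀.length = z.length - (a.length + v.length) := by
      have := congrArg List.length hz₀
      simp only [List.length_append, comp_length] at this
      omega
    refine ⟨comp bar v, ?_⟩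
    rw [← hz₀l, ← hz₀, List.drop_append_of_le_length (le_refl _), List.drop_length]
    simp
  have key : p.length ≤ z.length - (a.length + v.length) := hnc _ _ hoccp hoccs
  by_contra hcon
  push_neg at hcon
  have aper : ∀ i, i < a.length → a[i]? = v[i % v.length]? := by
    intro i
    induction i using Nat.strong_induction_on with
    | _ i ih =>
      intro hi
      have h1 : (v ++ a)[i]? = a[i]? := by
        obtain ⟨r, hr⟩ := hav
        rw [← hr, List.getElem?_append]
        simp [hi]
      by_cases hlt : i < v.length
      · rw [Nat.mod_eq_of_lt hlt, ← h1, List.getElem?_append]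
        simp [hlt]
      · push_neg at hlt
        have h2 : (v ++ a)[i]? = a[i - v.length]? := by
          rw [List.getElem?_append_right hlt]
        have h3 := ih (i - v.length) (by omega) (by omega)
        rw [← h1, h2, h3, Nat.mod_eq_sub_mod hlt]
  have vaper : ∀ j, j < a.length + v.length → (v ++ a)[j]? = v[j % v.length]? := by
    intro j hj
    by_cases hlt : j < v.length
    · rw [Nat.mod_eq_of_lt hlt, List.getElem?_append]
      simp [hlt]
    · push_neg at hlt
      rw [List.getElem?_append_right hlt, aper (j - v.length) (by omega),
        Nat.mod_eq_sub_mod hlt]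
  have hsufpt : ∀ r, r < a.length + v.length →
      z[z.length - (a.length + v.length) + r]? =
        (v[(a.length + v.length - 1 - r) % v.length]?).map bar := by
    intro r hr
    have h1 : z[z.length - (a.length + v.length) + r]? = (comp bar (v ++ a))[r]? := by
      have h2 := suffix_getElem? hsuf (j := r)
      simpa only [comp_length, List.length_append, Nat.add_comm v.length a.length] using h2
    rw [h1, comp_getElem? bar (v ++ a) (by simp only [List.length_append]; omega)]
    congr 1
    rw [show (v ++ a).length - 1 - r = a.length + v.length - 1 - r by
      simp only [List.length_append]; omega]
    exact vaper (a.length + v.length - 1 - r) (by omega)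
  have hprept : ∀ r, r < a.length → z[p.length + r]? = v[r % v.length]? := by
    intro r hr
    rw [occ_getElem? hoccp hr, aper r hr]
  have hrel : ∀ i, z.length - (a.length + v.length) ≤ i → i < p.length + a.length →
      v[(i - p.length) % v.length]? = (v[(z.length - 1 - i) % v.length]?).map bar := by
    intro i hi1 hi2
    have hip : p.length ≤ i := le_trans key hi1
    have e1 := hprept (i - p.length) (by omega)
    rw [(by omega : p.length + (i - p.length) = i)] at e1
    have e2 := hsufpt (i - (z.length - (a.length + v.length))) (by omega)
    rw [(by omega :
      z.length - (a.length + v.length) + (i - (z.length - (a.length + v.length))) = i)] at e2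
    rw [(by omega : a.length + v.length - 1 - (i - (z.length - (a.length + v.length)))
        = z.length - 1 - i)] at e2
    rw [← e1, e2]
  -- choose j₁
  have hQR := Nat.div_add_mod (z.length - (a.length + v.length) - p.length + v.length - 1) v.length
  have hRlt := Nat.mod_lt (z.length - (a.length + v.length) - p.length + v.length - 1) hd
  set Q := (z.length - (a.length + v.length) - p.length + v.length - 1) / v.length with hQdef
  set j₁ := p.length + v.length * Q with hj₁def
  have hj₁ge : z.length - (a.length + v.length) ≤ j₁ := by omega
  have hj₁lt : j₁ < z.length - (a.length + v.length) + v.length := by omega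
  have hj₁mod : j₁ % v.length = p.length % v.length := by
    simp [hj₁def, Nat.add_mul_mod_self_left]
  have hocc1 : a <+: z.drop j₁ := by
    apply prefix_of_pointwise
    · intro r hr
      have hQR' := Nat.div_add_mod (j₁ + r - (z.length - (a.length + v.length))) v.length
      have hRlt' := Nat.mod_lt (j₁ + r - (z.length - (a.length + v.length))) hd
      set ir := z.length - (a.length + v.length)
        + (j₁ + r - (z.length - (a.length + v.length))) % v.length with hirdef
      have hir1 : z.length - (a.length + v.length) ≤ ir := by omega
      have hir3 : ir < p.length + a.length := by omega
      have hirmod : ir % v.length = (j₁ + r) % v.length := by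
        have h5 : j₁ + r = ir + v.length * ((j₁ + r - (z.length - (a.length + v.length))) / v.length) := by
          omega
        rw [h5, Nat.add_mul_mod_self_left]
      have hrel_ir := hrel ir hir1 hir3
      have e3 : z[j₁ + r]? =
          (v[(a.length + v.length - 1 - (j₁ + r - (z.length - (a.length + v.length)))) % v.length]?).map bar := by
        have h6 := hsufpt (j₁ + r - (z.length - (a.length + v.length))) (by omega)
        rw [(by omega : z.length - (a.length + v.length)
          + (j₁ + r - (z.length - (a.length + v.length))) = j₁ + r)] at h6
        exact h6
      have idx1 : (a.length + v.length - 1 - (j₁ + r - (z.length - (a.length + v.length)))) % v.length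
          = (z.length - 1 - ir) % v.length := by
        rw [(by omega : a.length + v.length - 1 - (j₁ + r - (z.length - (a.length + v.length)))
          = z.length - 1 - (j₁ + r))]
        exact modeq_sub_left (by omega) (by omega) hirmod.symm
      have idx2 : (ir - p.length) % v.length = r % v.length :=
        modeq_sub_right (by omega) (hirmod.trans (Nat.ModEq.add_right r hj₁mod))
      rw [e3, idx1, ← hrel_ir, idx2, ← aper r hr]
    · omega
  have hle := hnc j₁ (z.length - (a.length + v.length)) hocc1 hoccs
  have hj₁eq : j₁ = z.length - (a.length + v.length) := by omega
  have heq : a = comp bar a := by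
    have h2 : a <+: z.drop (z.length - (a.length + v.length)) := hj₁eq ▸ hocc1
    rcases List.prefix_or_prefix_of_prefix h2 hoccs with h | h
    · exact List.IsPrefix.eq_of_length_le h (by rw [comp_length])
    · exact (List.IsPrefix.eq_of_length_le h (by rw [comp_length])).symm
  exact ha heq

end Core

/-! ### derivation machinery -/

namespace Deriv

variable {bar : S → S} {a u v w : List S}

/-- common pieces -/
def G (a u v : List S) : Set (List S) :=
  {g | g ++ a <+: u ++ a ∧ g ++ a <+: v ++ a}

/-- derivation state -/
def stw (bar : S → S) (w : List S) (A B : List (List S)) : List S :=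
  A.flatten ++ (w ++ comp bar (B.flatten))

lemma startA {a : List S} (l : List (List S)) (hl : ∀ g ∈ l, a <+: g ++ a)
    {t : List S} (ht : a <+: t) : a <+: l.flatten ++ t := by
  induction l with
  | nil => simpa using ht
  | cons g l' ih =>
    have hg : a <+: g ++ a := hl g List.mem_cons_self
    have h2 : a <+: l'.flatten ++ t := ih (fun g hg => hl g (List.mem_cons_of_mem _ hg))
    have h3 : g ++ a <+: g ++ (l'.flatten ++ t) :=
      (List.prefix_append_right_inj g).mpr h2
    have := hg.trans h3
    simpa [List.append_assoc] using this

lemma exists_max_split (l : List (List S)) (hl : l ≠ []) :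
    ∃ K g T, l = K ++ g :: T ∧ ∀ h ∈ l, h.length ≤ g.length := by
  induction l with
  | nil => exact absurd rfl hl
  | cons g l' ih =>
    rcases eq_or_ne l' [] with h0 | h0
    · exact ⟨[], g, [], by simp [h0], by simp [h0]⟩
    · obtain ⟨K', g', T', hsplit, hmax⟩ := ih h0
      by_cases hcmp : g'.length ≤ g.length
      · refine ⟨[], g, l', by simp, ?_⟩
        intro h hh
        rcases List.mem_cons.mp hh with h1 | h1
        · simp [h1]
        · exact le_trans (hmax h h1) hcmp
      · refine ⟨g :: K', g', T', by simp [hsplit], ?_⟩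
        intro h hh
        rcases List.mem_cons.mp hh with h1 | h1
        · subst h1; omega
        · exact hmax h h1

section Steps

variable (hbar : Function.Involutive bar)
  (hau : a <+: u ++ a) (hav : a <+: v ++ a)
  (hu : u ++ a <+: w) (hvacw : v ++ a <+: comp bar w)
  (hp : a <+: w) (hacw : a <+: comp bar w)
  (corew : ∀ g ∈ G a u v, g ≠ [] → g.length + 2 * a.length ≤ w.length)

include hbar hau hav hu hvacw hp hacw corew

lemma piece_start {g : List S} (hg : g ∈ G a u v) : a <+: g ++ a :=
  prefix_total hau hg.1 (by simp)

lemma stepPre (A₂ B₂ : List (List S)) (hA₂ : ∀ g ∈ A₂, g ∈ G a u v)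
    (hB₂ : ∀ g ∈ B₂, g ∈ G a u v)
    (δ : List S) (hδ : δ ∈ G a u v) (hδ0 : δ ≠ [])
    (hcond : B₂ = [] ∨ ∃ b t, B₂ = b :: t ∧ δ.length ≤ b.length) :
    HC bar a (stw bar w A₂ B₂) (stw bar w (δ :: A₂) B₂) := by
  have hstart : a <+: stw bar w A₂ B₂ :=
    startA A₂ (fun g hg => piece_start hbar hau hav hu hvacw hp hacw corew (hA₂ g hg))
      (hp.trans (w.prefix_append _))
  have h1 : δ ++ a <+: B₂.flatten ++ comp bar w := by
    rcases hcond with hc | ⟨b, t, rfl, hlen⟩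
    · subst hc
      simpa using hδ.2.trans hvacw
    · have hb := hB₂ b List.mem_cons_self
      have h2 : δ ++ a <+: b ++ a := prefix_total hδ.2 hb.2 (by simp; omega)
      have h3 : a <+: t.flatten ++ comp bar w :=
        startA t (fun g hg => piece_start hbar hau hav hu hvacw hp hacw corew
          (hB₂ g (List.mem_cons_of_mem _ hg))) hacw
      have h4 : b ++ a <+: b ++ (t.flatten ++ comp bar w) :=
        (List.prefix_append_right_inj b).mpr h3
      have := h2.trans h4
      simpa [List.append_assoc] using this
  have SUF : comp bar a ++ comp bar δ <:+ w ++ comp bar B₂.flatten := by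
    have h2 := comp_prefix bar h1
    rw [comp_append, comp_append, comp_comp bar hbar] at h2
    exact h2
  have hlen : δ.length + 2 * a.length ≤ w.length := corew δ hδ hδ0
  have SUF' : comp bar a ++ comp bar δ <:+ stw bar w A₂ B₂ :=
    suffix_append_left _ SUF
  obtain ⟨z₁, hz₁⟩ := SUF'
  have hz₁len : a.length ≤ z₁.length := by
    have h5 := congrArg List.length hz₁
    simp only [List.length_append, comp_length] at h5
    have h6 : w.length ≤ (stw bar w A₂ B₂).length := by
      simp [stw]; omega
    omega
  have ha_z₁ : a <+: z₁ := by
    rw [← hz₁] at hstart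
    exact prefix_head hstart hz₁len
  obtain ⟨β, hβ⟩ := ha_z₁
  refine Or.inr ⟨δ, β, ?_, ?_⟩
  · rw [← hz₁, ← hβ]
    simp [List.append_assoc]
  · simp [stw, List.append_assoc]

lemma stepApp (A₂ B₂ : List (List S)) (hA₂ : ∀ g ∈ A₂, g ∈ G a u v)
    (hB₂ : ∀ g ∈ B₂, g ∈ G a u v)
    (γ : List S) (hγ : γ ∈ G a u v) (hγ0 : γ ≠ [])
    (hcond : A₂ = [] ∨ ∃ b t, A₂ = b :: t ∧ γ.length ≤ b.length) :
    HC bar a (stw bar w A₂ B₂) (stw bar w A₂ (γ :: B₂)) := by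
  have pre : γ ++ a <+: stw bar w A₂ B₂ := by
    rcases hcond with hc | ⟨b, t, rfl, hlen⟩
    · subst hc
      have : γ ++ a <+: w := hγ.1.trans hu
      simpa [stw] using this.trans (w.prefix_append _)
    · have hb := hA₂ b List.mem_cons_self
      have h2 : γ ++ a <+: b ++ a := prefix_total hγ.1 hb.1 (by simp; omega)
      have h3 : a <+: t.flatten ++ (w ++ comp bar B₂.flatten) :=
        startA t (fun g hg => piece_start hbar hau hav hu hvacw hp hacw corew
          (hA₂ g (List.mem_cons_of_mem _ hg))) (hp.trans (w.prefix_append _))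
      have h4 : b ++ a <+: b ++ (t.flatten ++ (w ++ comp bar B₂.flatten)) :=
        (List.prefix_append_right_inj b).mpr h3
      have := h2.trans h4
      simpa [stw, List.append_assoc] using this
  have SUF : comp bar a <:+ stw bar w A₂ B₂ := by
    have h1 : a <+: B₂.flatten ++ comp bar w :=
      startA B₂ (fun g hg => piece_start hbar hau hav hu hvacw hp hacw corew (hB₂ g hg)) hacw
    have h2 := comp_prefix bar h1
    rw [comp_append, comp_comp bar hbar] at h2
    exact suffix_append_left _ h2
  have hlen : γ.length + 2 * a.length ≤ w.length := corew γ hγ hγ0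
  obtain ⟨t', ht'⟩ := pre
  have ht'suf : t' <:+ stw bar w A₂ B₂ := ⟨γ ++ a, ht'⟩
  have ht'len : a.length ≤ t'.length := by
    have h5 := congrArg List.length ht'
    simp only [List.length_append] at h5
    have h6 : w.length ≤ (stw bar w A₂ B₂).length := by
      simp [stw]; omega
    omega
  have hsuf_t : comp bar a <:+ t' :=
    suffix_total SUF ht'suf (by rw [comp_length]; omega)
  obtain ⟨β, hβ⟩ := hsuf_t
  refine Or.inl ⟨γ, β, ?_, ?_⟩
  · rw [← ht', ← hβ]
    simp [List.append_assoc]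
  · simp [stw, comp_append, List.append_assoc]

lemma playA (l : List (List S)) :
    ∀ (A₂ B₂ : List (List S)), (∀ g ∈ l, g ∈ G a u v ∧ g ≠ []) →
    (∀ g ∈ A₂, g ∈ G a u v) → (∀ g ∈ B₂, g ∈ G a u v) →
    (B₂ = [] ∨ ∃ b t, B₂ = b :: t ∧ ∀ g ∈ l, g.length ≤ b.length) →
    Relation.ReflTransGen (HC bar a) (stw bar w A₂ B₂) (stw bar w (l ++ A₂) B₂) := by
  induction l using List.reverseRecOn with
  | nil => intro A₂ B₂ _ _ _ _; simpa using Relation.ReflTransGen.refl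
  | append_singleton l δ ih =>
    intro A₂ B₂ hl hA₂ hB₂ hcond
    have hδ := hl δ (by simp)
    have hstep : HC bar a (stw bar w A₂ B₂) (stw bar w (δ :: A₂) B₂) := by
      apply stepPre hbar hau hav hu hvacw hp hacw corew A₂ B₂ hA₂ hB₂ δ hδ.1 hδ.2
      rcases hcond with hc | ⟨b, t, rfl, hmax⟩
      · exact Or.inl hc
      · exact Or.inr ⟨b, t, rfl, hmax δ (by simp)⟩
    have hrest := ih (δ :: A₂) B₂
      (fun g hg => hl g (by simp [hg]))
      (by intro g hg; rcases List.mem_cons.mp hg with h | h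
          exacts [h ▸ hδ.1, hA₂ g h])
      hB₂
      (by rcases hcond with hc | ⟨b, t, rfl, hmax⟩
          · exact Or.inl hc
          · exact Or.inr ⟨b, t, rfl, fun g hg => hmax g (by simp [hg])⟩)
    have := (Relation.ReflTransGen.single hstep).trans hrest
    simpa [List.append_assoc] using this

lemma playB (l : List (List S)) :
    ∀ (A₂ B₂ : List (List S)), (∀ g ∈ l, g ∈ G a u v ∧ g ≠ []) →
    (∀ g ∈ A₂, g ∈ G a u v) → (∀ g ∈ B₂, g ∈ G a u v) →
    (A₂ = [] ∨ ∃ b t, A₂ = b :: t ∧ ∀ g ∈ l, g.length ≤ b.length) →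
    Relation.ReflTransGen (HC bar a) (stw bar w A₂ B₂) (stw bar w A₂ (l ++ B₂)) := by
  induction l using List.reverseRecOn with
  | nil => intro A₂ B₂ _ _ _ _; simpa using Relation.ReflTransGen.refl
  | append_singleton l γ ih =>
    intro A₂ B₂ hl hA₂ hB₂ hcond
    have hγ := hl γ (by simp)
    have hstep : HC bar a (stw bar w A₂ B₂) (stw bar w A₂ (γ :: B₂)) := by
      apply stepApp hbar hau hav hu hvacw hp hacw corew A₂ B₂ hA₂ hB₂ γ hγ.1 hγ.2
      rcases hcond with hc | ⟨b, t, rfl, hmax⟩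
      · exact Or.inl hc
      · exact Or.inr ⟨b, t, rfl, hmax γ (by simp)⟩
    have hrest := ih A₂ (γ :: B₂)
      (fun g hg => hl g (by simp [hg]))
      hA₂
      (by intro g hg; rcases List.mem_cons.mp hg with h | h
          exacts [h ▸ hγ.1, hB₂ g h])
      (by rcases hcond with hc | ⟨b, t, rfl, hmax⟩
          · exact Or.inl hc
          · exact Or.inr ⟨b, t, rfl, fun g hg => hmax g (by simp [hg])⟩)
    have := (Relation.ReflTransGen.single hstep).trans hrest
    simpa [List.append_assoc] using this

lemma merge (N : ℕ) :
    ∀ (A₁ B₁ A₂ B₂ : List (List S)),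
    A₁.length + B₁.length ≤ N →
    (∀ g ∈ A₁, g ∈ G a u v ∧ g ≠ []) → (∀ g ∈ B₁, g ∈ G a u v ∧ g ≠ []) →
    (∀ g ∈ A₂, g ∈ G a u v) → (∀ g ∈ B₂, g ∈ G a u v) →
    (B₂ = [] ∨ ∃ b t, B₂ = b :: t ∧ ∀ g ∈ A₁, g.length ≤ b.length) →
    (A₂ = [] ∨ ∃ b t, A₂ = b :: t ∧ ∀ g ∈ B₁, g.length ≤ b.length) →
    Relation.ReflTransGen (HC bar a) (stw bar w A₂ B₂) (stw bar w (A₁ ++ A₂) (B₁ ++ B₂)) := by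
  induction N with
  | zero =>
    intro A₁ B₁ A₂ B₂ hN _ _ _ _ _ _
    have hA : A₁ = [] := List.length_eq_zero_iff.mp (by omega)
    have hB : B₁ = [] := List.length_eq_zero_iff.mp (by omega)
    subst hA; subst hB
    simp only [List.nil_append]
    exact Relation.ReflTransGen.refl
  | succ N ih =>
    intro A₁ B₁ A₂ B₂ hN hA₁ hB₁ hA₂ hB₂ inv1 inv2
    rcases eq_or_ne A₁ [] with hA1 | hA1
    · subst hA1
      rcases eq_or_ne B₁ [] with hB1 | hB1
      · subst hB1
        simp only [List.nil_append]
        exact Relation.ReflTransGen.refl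
      · obtain ⟨K, g0, T, hsplit, hmax⟩ := exists_max_split B₁ hB1
        have hchunkmem : ∀ g ∈ (g0 :: T), g ∈ G a u v ∧ g ≠ [] := by
          intro g hg; exact hB₁ g (by rw [hsplit]; exact List.mem_append_right _ hg)
        have step1 := playB hbar hau hav hu hvacw hp hacw corew (g0 :: T) A₂ B₂
          hchunkmem hA₂ hB₂
          (by rcases inv2 with h | ⟨b, t, rfl, hmx⟩
              · exact Or.inl h
              · exact Or.inr ⟨b, t, rfl, fun g hg => hmx g
                  (by rw [hsplit]; exact List.mem_append_right _ hg)⟩)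
        have hKlen : K.length + 1 + T.length = B₁.length := by
          have := congrArg List.length hsplit; simp at this; omega
        have step2 := ih [] K A₂ ((g0 :: T) ++ B₂) (by simp; omega)
          (by simp)
          (fun g hg => hB₁ g (by rw [hsplit]; exact List.mem_append_left _ hg))
          hA₂
          (by intro g hg
              rcases List.mem_append.mp hg with h | h
              exacts [(hchunkmem g h).1, hB₂ g h])
          (Or.inr ⟨g0, T ++ B₂, by simp, by simp⟩)
          (by rcases inv2 with h | ⟨b, t, rfl, hmx⟩
              · exact Or.inl h
              · exact Or.inr ⟨b, t, rfl, fun g hg => hmx g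
                  (by rw [hsplit]; exact List.mem_append_left _ hg)⟩)
        have := step1.trans step2
        simpa [hsplit, List.append_assoc] using this
    · obtain ⟨KA, gA, TA, hAsplit, hAmax⟩ := exists_max_split A₁ hA1
      have hBmax_le : (∀ g ∈ B₁, g.length ≤ gA.length) ∨
          (B₁ ≠ [] ∧ ∃ KB gB TB, B₁ = KB ++ gB :: TB ∧ (∀ g ∈ B₁, g.length ≤ gB.length) ∧
            gA.length ≤ gB.length) := by
        rcases eq_or_ne B₁ [] with hB1 | hB1
        · exact Or.inl (by simp [hB1])
        · obtain ⟨KB, gB, TB, hBsplit, hBmaxx⟩ := exists_max_split B₁ hB1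
          by_cases hcmp : gB.length ≤ gA.length
          · exact Or.inl (fun g hg => le_trans (hBmaxx g hg) hcmp)
          · exact Or.inr ⟨hB1, KB, gB, TB, hBsplit, hBmaxx, by omega⟩
      rcases hBmax_le with hcase | ⟨hB1, KB, gB, TB, hBsplit, hBmaxx, hABle⟩
      · -- play A chunk
        have hchunkmem : ∀ g ∈ (gA :: TA), g ∈ G a u v ∧ g ≠ [] := by
          intro g hg; exact hA₁ g (by rw [hAsplit]; exact List.mem_append_right _ hg)
        have step1 := playA hbar hau hav hu hvacw hp hacw corew (gA :: TA) A₂ B₂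
          hchunkmem hA₂ hB₂
          (by rcases inv1 with h | ⟨b, t, rfl, hmx⟩
              · exact Or.inl h
              · exact Or.inr ⟨b, t, rfl, fun g hg => hmx g
                  (by rw [hAsplit]; exact List.mem_append_right _ hg)⟩)
        have hKlen : KA.length + 1 + TA.length = A₁.length := by
          have := congrArg List.length hAsplit; simp at this; omega
        have step2 := ih KA B₁ ((gA :: TA) ++ A₂) B₂ (by omega)
          (fun g hg => hA₁ g (by rw [hAsplit]; exact List.mem_append_left _ hg))
          hB₁
          (by intro g hg
              rcases List.mem_append.mp hg with h | h
              exacts [(hchunkmem g h).1, hA₂ g h])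
          hB₂
          (by rcases inv1 with h | ⟨b, t, rfl, hmx⟩
              · exact Or.inl h
              · exact Or.inr ⟨b, t, rfl, fun g hg => hmx g
                  (by rw [hAsplit]; exact List.mem_append_left _ hg)⟩)
          (Or.inr ⟨gA, TA ++ A₂, by simp, hcase⟩)
        have := step1.trans step2
        simpa [hAsplit, List.append_assoc] using this
      · -- play B chunk
        have hchunkmem : ∀ g ∈ (gB :: TB), g ∈ G a u v ∧ g ≠ [] := by
          intro g hg; exact hB₁ g (by rw [hBsplit]; exact List.mem_append_right _ hg)
        have step1 := playB hbar hau hav hu hvacw hp hacw corew (gB :: TB) A₂ B₂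
          hchunkmem hA₂ hB₂
          (by rcases inv2 with h | ⟨b, t, rfl, hmx⟩
              · exact Or.inl h
              · exact Or.inr ⟨b, t, rfl, fun g hg => hmx g
                  (by rw [hBsplit]; exact List.mem_append_right _ hg)⟩)
        have hKlen : KB.length + 1 + TB.length = B₁.length := by
          have := congrArg List.length hBsplit; simp at this; omega
        have step2 := ih A₁ KB A₂ ((gB :: TB) ++ B₂) (by omega)
          hA₁
          (fun g hg => hB₁ g (by rw [hBsplit]; exact List.mem_append_left _ hg))
          hA₂
          (by intro g hg
              rcases List.mem_append.mp hg with h | h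
              exacts [(hchunkmem g h).1, hB₂ g h])
          (Or.inr ⟨gB, TB ++ B₂, by simp, fun g hg => le_trans (hAmax g hg) hABle⟩)
          (by rcases inv2 with h | ⟨b, t, rfl, hmx⟩
              · exact Or.inl h
              · exact Or.inr ⟨b, t, rfl, fun g hg => hmx g
                  (by rw [hBsplit]; exact List.mem_append_left _ hg)⟩)
        have := step1.trans step2
        simpa [hBsplit, List.append_assoc] using this

end Steps
end Deriv


theorem stmt14 (bar : S → S) (hbar : Function.Involutive bar)
    (a w : List S) (ha : a ≠ comp bar a)
    (hp : a <+: w) (hs : comp bar a <:+ w)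
    (hnc : NonCrossing bar a w) (u v : List S)
    (hu : u ∈ Pa a w) (hv : v ∈ barSa bar a w)
    (h1 : v ∈ star (Pa a (u ++ a)))
    (h2 : u ∈ star (barSa bar a (comp bar a ++ comp bar v))) :
    ∀ x ∈ star (Pa a (u ++ a)), ∀ y ∈ star (comp bar '' Pa a (u ++ a)),
      x ++ w ++ y ∈ HCstar bar a w := by
  intro x hx y hy
  have huw : u ++ a <+: w := hu
  have hsufw : comp bar (v ++ a) <:+ w := by
    rw [comp_append]; exact hv
  have hvacw : v ++ a <+: comp bar w := by
    have h3 := comp_suffix bar (hv : comp bar a ++ comp bar v <:+ w)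
    rw [comp_append] at h3
    simp only [comp_comp bar hbar] at h3
    exact h3
  have hacw : a <+: comp bar w := by
    have h3 := comp_suffix bar hs
    rw [comp_comp bar hbar] at h3
    exact h3
  have hau : a <+: u ++ a := prefix_total hp huw (by simp)
  have hav : a <+: v ++ a := prefix_total hacw hvacw (by simp)
  -- core length bound
  have corew : ∀ g ∈ Deriv.G a u v, g ≠ [] → g.length + 2 * a.length ≤ w.length := by
    intro g hg hg0
    have hv0 : v ≠ [] := by
      intro hveq
      subst hveq
      have h4 : g.length + a.length ≤ a.length := by simpa using hg.2.length_le
      exact hg0 (List.length_eq_zero_iff.mp (by omega))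
    exact core_gen bar a v w g ha hv0 hav hsufw (hg.1.trans huw) hnc
  -- translate h1 and h2 to flatten form
  obtain ⟨lv, hlv, hflv⟩ := h1
  obtain ⟨lu, hlu, hflu⟩ := h2
  have hlu' : ∀ g ∈ lu, g ++ a <+: v ++ a := by
    intro g hg
    have h3 : comp bar a ++ comp bar g <:+ comp bar a ++ comp bar v := hlu g hg
    have h4 : comp bar (g ++ a) <:+ comp bar (v ++ a) := by
      rw [comp_append, comp_append]; exact h3
    have h5 := comp_suffix bar h4
    rw [comp_comp bar hbar, comp_comp bar hbar] at h5
    exact h5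
  have hlv' : ∀ g ∈ lv, g ++ a <+: u ++ a := fun g hg => hlv g hg
  -- GG : every P-piece factors into common pieces
  have hGG : ∀ p : List S, p ++ a <+: u ++ a → p ∈ star (GAB a u v) := by
    intro p hpP
    exact gg u v hau hav ⟨lv, hlv', hflv⟩ ⟨lu, hlu', hflu⟩ p.length p le_rfl (Or.inl hpP)
  have hGeq : GAB a u v = Deriv.G a u v := rfl
  -- x ∈ star G
  have hxG : x ∈ star (GAB a u v) := star_bind (fun g hg => hGG g hg) hx
  -- Y := comp y ∈ star G
  obtain ⟨ly, hly, hfly⟩ := hy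
  have hYstar : comp bar y ∈ star (GAB a u v) := by
    have hYrep : comp bar y = ((ly.map (comp bar)).reverse).flatten := by
      rw [hfly]
      clear hly hfly
      induction ly with
      | nil => simp [comp]
      | cons e l' ih => simp [comp_append, ih]
    refine star_bind (fun g hg => hGG g hg) ⟨(ly.map (comp bar)).reverse, ?_, hYrep⟩
    intro g hg
    rw [List.mem_reverse, List.mem_map] at hg
    obtain ⟨e, hel, rfl⟩ := hg
    obtain ⟨q, hq, rfl⟩ := hly e hel
    rw [comp_comp bar hbar]
    exact hq
  obtain ⟨LA, hLA, hxA⟩ := hxG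
  obtain ⟨LB, hLB, hYB⟩ := hYstar
  -- filter out empty pieces
  set A := LA.filter (fun g => !g.isEmpty) with hAdef
  set B := LB.filter (fun g => !g.isEmpty) with hBdef
  have hApieces : ∀ g ∈ A, g ∈ Deriv.G a u v ∧ g ≠ [] := by
    intro g hg
    rw [hAdef, List.mem_filter] at hg
    refine ⟨hLA g hg.1, ?_⟩
    intro h0; subst h0; simpa using hg.2
  have hBpieces : ∀ g ∈ B, g ∈ Deriv.G a u v ∧ g ≠ [] := by
    intro g hg
    rw [hBdef, List.mem_filter] at hg
    refine ⟨hLB g hg.1, ?_⟩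
    intro h0; subst h0; simpa using hg.2
  have hAflat : A.flatten = x := by rw [hAdef, flatten_filter_ne_nil, ← hxA]
  have hBflat : B.flatten = comp bar y := by rw [hBdef, flatten_filter_ne_nil, ← hYB]
  have hmerge := Deriv.merge hbar hau hav huw hvacw hp hacw corew
    (A.length + B.length) A B [] [] le_rfl hApieces hBpieces
    (by simp) (by simp) (Or.inl rfl) (Or.inl rfl)
  have hstart : Deriv.stw bar w ([] : List (List S)) ([] : List (List S)) = w := by
    simp [Deriv.stw, comp]
  have hend : Deriv.stw bar w (A ++ []) (B ++ []) = x ++ w ++ y := by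
    simp only [List.append_nil, Deriv.stw, hAflat, hBflat, comp_comp bar hbar]
    simp [List.append_assoc]
  rw [hstart, hend] at hmerge
  exact hmerge

end Hairpin
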